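/- Let I be a nondegenerate interval of ℝ, f : I → I continuous, m ≥ 2, and let B = {β₁ < ⋯ < β_m} be an m-orbit of f. Then for every r ∈ {1,…,m−1} there exist r', r'' ∈ {1,…,m−1} such that the digraph of B has edges J_{r'} → J_r and J_r → J_{r''}; moreover, unless m is even and r = m/2, one may choose r' ≠ r, and unless m = 2, one may choose r'' ≠ r. -/

import Mathlib

open Set Function

/-- `c` is a periodic point of `f` of (exact) period `n`:
`f^[n] c = c` and `f^[k] c ≠ c` for `1 ≤ k < n`. -/
def PeriodicOfPeriod (f : ℝ → ℝ) (n : ℕ) (c : ℝ) : Prop :=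
  f^[n] c = c ∧ ∀ k, 0 < k → k < n → f^[k] c ≠ c

/-- `β` (with 1-based indices `1,…,m`) enumerates an `m`-orbit of `f` in `I` in
increasing order: `β 1 < β 2 < ⋯ < β m`, the points lie in `I`, and they form the
orbit `{c, f c, …, f^[m-1] c}` of a periodic point `c` of period `m`. -/
def IsOrbit (f : ℝ → ℝ) (I : Set ℝ) (m : ℕ) (β : ℕ → ℝ) : Prop :=
  (∀ i, 1 ≤ i → i < m → β i < β (i + 1)) ∧
  (∀ i, 1 ≤ i → i ≤ m → β i ∈ I) ∧
  ∃ c ∈ I, PeriodicOfPeriod f m c ∧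
    β '' Set.Icc 1 m = {x | ∃ k, k < m ∧ f^[k] c = x}

/-- The digraph of the orbit `β₁ < ⋯ < β_m`: an edge `J_i → J_s` means
`[β_s, β_{s+1}] ⊆ [min (f β_i) (f β_{i+1}), max (f β_i) (f β_{i+1})]`. -/
def HasEdge (f : ℝ → ℝ) (β : ℕ → ℝ) (i s : ℕ) : Prop :=
  Set.Icc (β s) (β (s + 1)) ⊆
    Set.Icc (min (f (β i)) (f (β (i + 1)))) (max (f (β i)) (f (β (i + 1))))

/-- A predicate constant along consecutive steps is constant on an interval. -/
private lemma step_eq (P : ℕ → Prop) (a b : ℕ)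
    (h : ∀ i, a ≤ i → i < b → (P i ↔ P (i + 1))) :
    ∀ k, a ≤ k → k ≤ b → (P a ↔ P k) := by
  intro k
  induction k with
  | zero =>
    intro h1 _
    have : a = 0 := by omega
    rw [this]
  | succ n ih =>
    intro h1 h2
    rcases Nat.lt_or_ge a (n + 1) with hlt | hge
    · exact (ih (by omega) (by omega)).trans (h n (by omega) (by omega))
    · have : a = n + 1 := by omega
      rw [this]

/-- Pigeonhole: an injection from `[a,b]` into `[c,d]` forces a cardinality bound. -/
private lemma card_le_of_inj (σ : ℕ → ℕ) (a b c d : ℕ)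
    (hmap : ∀ i, a ≤ i → i ≤ b → c ≤ σ i ∧ σ i ≤ d)
    (hinj : ∀ i j, a ≤ i → i ≤ b → a ≤ j → j ≤ b → σ i = σ j → i = j) :
    b + 1 - a ≤ d + 1 - c := by
  have h := Finset.card_le_card_of_injOn (s := Finset.Icc a b) (t := Finset.Icc c d) σ
    (fun x hx => by
      simp only [Finset.coe_Icc, Set.mem_Icc, Finset.mem_coe, Finset.mem_Icc] at hx ⊢
      exact hmap x hx.1 hx.2)
    (fun x hx y hy he => by
      simp only [Finset.coe_Icc, Set.mem_Icc] at hx hy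
      exact hinj x y hx.1 hx.2 hy.1 hy.2 he)
  simpa [Nat.card_Icc] using h

/-- Strict monotonicity of the orbit enumeration on its range. -/
private lemma beta_lt_aux (m : ℕ) (β : ℕ → ℝ)
    (h : ∀ i, 1 ≤ i → i < m → β i < β (i + 1)) :
    ∀ k j, 1 ≤ j → j < k → k ≤ m → β j < β k := by
  intro k
  induction k with
  | zero => intro j h1 h2 _; omega
  | succ n ih =>
    intro j h1 h2 h3
    rcases Nat.lt_or_ge j n with hlt | hge
    · exact lt_trans (ih j h1 hlt (by omega)) (h n (by omega) (by omega))
    · have : j = n := by omega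
      rw [this]
      exact h n (by omega) (by omega)

/-- In the digraph of an `m`-orbit (`m ≥ 2`), every vertex `J_r` has an incoming
edge `J_{r'} → J_r` and an outgoing edge `J_r → J_{r''}`; moreover one may choose
`r' ≠ r` unless `m` is even and `r = m/2`, and one may choose `r'' ≠ r`
unless `m = 2`. -/
theorem digraph_in_out_edges (I : Set ℝ) (hI : I.OrdConnected)
    (hne : ∃ a ∈ I, ∃ b ∈ I, a ≠ b)
    (f : ℝ → ℝ) (hf : ContinuousOn f I) (hmaps : Set.MapsTo f I I)
    (m : ℕ) (hm : 2 ≤ m) (β : ℕ → ℝ) (hB : IsOrbit f I m β) :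
    ∀ r, 1 ≤ r → r ≤ m - 1 →
      (∃ r', 1 ≤ r' ∧ r' ≤ m - 1 ∧ HasEdge f β r' r) ∧
      (∃ r'', 1 ≤ r'' ∧ r'' ≤ m - 1 ∧ HasEdge f β r r'') ∧
      (¬(Even m ∧ 2 * r = m) →
        ∃ r', 1 ≤ r' ∧ r' ≤ m - 1 ∧ r' ≠ r ∧ HasEdge f β r' r) ∧
      (m ≠ 2 → ∃ r'', 1 ≤ r'' ∧ r'' ≤ m - 1 ∧ r'' ≠ r ∧ HasEdge f β r r'') := by
  obtain ⟨hmono, hmem, c, hcI, hper, horb⟩ := hB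
  have hm0 : 0 < m := by omega
  -- monotonicity facts
  have βlt : ∀ j k, 1 ≤ j → j < k → k ≤ m → β j < β k := fun j k h1 h2 h3 =>
    beta_lt_aux m β hmono k j h1 h2 h3
  have βle : ∀ j k, 1 ≤ j → j ≤ k → k ≤ m → β j ≤ β k := by
    intro j k h1 h2 h3
    rcases Nat.lt_or_ge j k with h | h
    · exact le_of_lt (βlt j k h1 h h3)
    · have : j = k := by omega
      rw [this]
  have βinj : ∀ j k, 1 ≤ j → j ≤ m → 1 ≤ k → k ≤ m → β j = β k → j = k := by
    intro j k h1 h2 h3 h4 he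
    by_contra hne'
    rcases Nat.lt_or_ge j k with h | h
    · exact absurd he (ne_of_lt (βlt j k h1 h h4))
    · have : k < j := by omega
      exact absurd he.symm (ne_of_lt (βlt k j h3 this h2))
  -- orbit membership both ways
  have hβorb : ∀ i, 1 ≤ i → i ≤ m → ∃ k, k < m ∧ f^[k] c = β i := by
    intro i h1 h2
    have : β i ∈ β '' Set.Icc 1 m := ⟨i, ⟨h1, h2⟩, rfl⟩
    rw [horb] at this
    exact this
  have horbβ : ∀ k, k < m → ∃ i, 1 ≤ i ∧ i ≤ m ∧ β i = f^[k] c := by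
    intro k hk
    have : f^[k] c ∈ β '' Set.Icc 1 m := by
      rw [horb]; exact ⟨k, hk, rfl⟩
    obtain ⟨i, ⟨h1, h2⟩, he⟩ := this
    exact ⟨i, h1, h2, he⟩
  -- each orbit point has exact period m
  have hβper : ∀ i, 1 ≤ i → i ≤ m → f^[m] (β i) = β i := by
    intro i h1 h2
    obtain ⟨k, hk, hke⟩ := hβorb i h1 h2
    calc f^[m] (β i) = f^[m] (f^[k] c) := by rw [hke]
      _ = f^[m + k] c := (Function.iterate_add_apply f m k c).symm
      _ = f^[k] (f^[m] c) := by rw [Nat.add_comm, Function.iterate_add_apply]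
      _ = f^[k] c := by rw [hper.1]
      _ = β i := hke
  -- define the index permutation σ
  have hσex : ∀ i : ℕ, ∃ j, (1 ≤ i ∧ i ≤ m) → (1 ≤ j ∧ j ≤ m ∧ β j = f (β i)) := by
    intro i
    by_cases h : 1 ≤ i ∧ i ≤ m
    · obtain ⟨k, hk, hke⟩ := hβorb i h.1 h.2
      have hfi : f (β i) = f^[k + 1] c := by
        rw [Function.iterate_succ_apply', hke]
      by_cases hkm : k + 1 = m
      · obtain ⟨j, h1, h2, h3⟩ := horbβ 0 (by omega)
        refine ⟨j, fun _ => ⟨h1, h2, ?_⟩⟩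
        rw [h3, hfi, hkm, hper.1]
        simp
      · obtain ⟨j, h1, h2, h3⟩ := horbβ (k + 1) (by omega)
        exact ⟨j, fun _ => ⟨h1, h2, by rw [h3, hfi]⟩⟩
    · exact ⟨1, fun hh => absurd hh h⟩
  choose σ hσ using hσex
  have hσ1 : ∀ i, 1 ≤ i → i ≤ m → 1 ≤ σ i := fun i a b => (hσ i ⟨a, b⟩).1
  have hσ2 : ∀ i, 1 ≤ i → i ≤ m → σ i ≤ m := fun i a b => (hσ i ⟨a, b⟩).2.1
  have hσf : ∀ i, 1 ≤ i → i ≤ m → β (σ i) = f (β i) := fun i a b => (hσ i ⟨a, b⟩).2.2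
  -- injectivity of σ
  have hfinj : ∀ i j, 1 ≤ i → i ≤ m → 1 ≤ j → j ≤ m → f (β i) = f (β j) → i = j := by
    intro i j hi1 hi2 hj1 hj2 he
    have h1 : f^[(m - 1) + 1] (β i) = f^[(m - 1) + 1] (β j) := by
      rw [Function.iterate_succ_apply, Function.iterate_succ_apply, he]
    have hm1 : (m - 1) + 1 = m := by omega
    rw [hm1, hβper i hi1 hi2, hβper j hj1 hj2] at h1
    exact βinj i j hi1 hi2 hj1 hj2 h1
  have hσinj : ∀ i j, 1 ≤ i → i ≤ m → 1 ≤ j → j ≤ m → σ i = σ j → i = j := by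
    intro i j hi1 hi2 hj1 hj2 he
    have : f (β i) = f (β j) := by
      rw [← hσf i hi1 hi2, ← hσf j hj1 hj2, he]
    exact hfinj i j hi1 hi2 hj1 hj2 this
  -- no fixed points
  have hσnofix : ∀ i, 1 ≤ i → i ≤ m → σ i ≠ i := by
    intro i h1 h2 he
    have hfix : f (β i) = β i := by rw [← hσf i h1 h2, he]
    obtain ⟨k, hk, hke⟩ := hβorb i h1 h2
    have h3 : f^[k + 1] c = f^[k] c := by
      rw [Function.iterate_succ_apply', hke, hfix]
    have h4 : f^[m - k - 1] (f^[k + 1] c) = f^[m - k - 1] (f^[k] c) := by rw [h3]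
    rw [← Function.iterate_add_apply, ← Function.iterate_add_apply,
      show m - k - 1 + (k + 1) = m from by omega,
      show m - k - 1 + k = m - 1 from by omega, hper.1] at h4
    exact hper.2 (m - 1) (by omega) (by omega) h4.symm
  -- no 2-cycles when m ≠ 2
  have hσ2fix : m ≠ 2 → ∀ i, 1 ≤ i → i ≤ m → σ (σ i) ≠ i := by
    intro hm2 i h1 h2 he
    have hs1 := hσ1 i h1 h2
    have hs2 := hσ2 i h1 h2
    have hfix : f (f (β i)) = β i := by
      rw [← hσf i h1 h2, ← hσf (σ i) hs1 hs2, he]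
    obtain ⟨k, hk, hke⟩ := hβorb i h1 h2
    have h3 : f^[k + 2] c = f^[k] c := by
      have e1 : f^[k + 2] c = f (f (f^[k] c)) := by
        rw [show k + 2 = (k + 1) + 1 from rfl, Function.iterate_succ_apply',
          Function.iterate_succ_apply']
      rw [e1, hke, hfix]
    have h2m : f^[2 * m] c = c := by
      rw [two_mul, Function.iterate_add_apply, hper.1, hper.1]
    have h4 : f^[2 * m - k] (f^[k + 2] c) = f^[2 * m - k] (f^[k] c) := by rw [h3]
    rw [← Function.iterate_add_apply, ← Function.iterate_add_apply,
      show 2 * m - k + (k + 2) = 2 + 2 * m from by omega,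
      show 2 * m - k + k = 2 * m from by omega, h2m,
      Function.iterate_add_apply, h2m] at h4
    exact hper.2 2 (by omega) (by omega) h4
  -- surjectivity of σ
  have hσsurj : ∀ j, 1 ≤ j → j ≤ m → ∃ i, 1 ≤ i ∧ i ≤ m ∧ σ i = j := by
    intro j hj1 hj2
    obtain ⟨k, hk, hke⟩ := hβorb j hj1 hj2
    rcases Nat.eq_zero_or_pos k with h0 | h0
    · obtain ⟨i, hi1, hi2, hie⟩ := horbβ (m - 1) (by omega)
      refine ⟨i, hi1, hi2, ?_⟩
      apply βinj (σ i) j (hσ1 i hi1 hi2) (hσ2 i hi1 hi2) hj1 hj2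
      have : β j = c := by rw [← hke, h0]; simp
      rw [hσf i hi1 hi2, hie, ← Function.iterate_succ_apply' f (m - 1) c,
        show (m - 1).succ = m from by omega, hper.1, this]
    · obtain ⟨i, hi1, hi2, hie⟩ := horbβ (k - 1) (by omega)
      refine ⟨i, hi1, hi2, ?_⟩
      apply βinj (σ i) j (hσ1 i hi1 hi2) (hσ2 i hi1 hi2) hj1 hj2
      rw [hσf i hi1 hi2, hie, ← Function.iterate_succ_apply' f (k - 1) c,
        show (k - 1).succ = k from by omega, hke]
  -- no invariant prefix
  have hnoinv : ∀ r, 1 ≤ r → r < m → ¬(∀ i, 1 ≤ i → i ≤ r → σ i ≤ r) := by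
    intro r hr1 hr2 hinv
    obtain ⟨k1, hk1, hk1e⟩ := hβorb 1 (le_refl 1) (by omega)
    have claim : ∀ j, ∃ i, 1 ≤ i ∧ i ≤ r ∧ β i = f^[k1 + j] c := by
      intro j
      induction j with
      | zero => exact ⟨1, le_refl 1, hr1, by simpa using hk1e.symm⟩
      | succ n ih =>
        obtain ⟨i, h1, h2, he⟩ := ih
        refine ⟨σ i, hσ1 i h1 (by omega), hinv i h1 h2, ?_⟩
        rw [hσf i h1 (by omega), show k1 + (n + 1) = (k1 + n) + 1 from rfl,
          Function.iterate_succ_apply', ← he]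
    obtain ⟨l, hl, hle⟩ := hβorb m (by omega) (le_refl m)
    obtain ⟨i, h1, h2, he⟩ := claim (m - k1 + l)
    have heq : β i = β m := by
      rw [he, show k1 + (m - k1 + l) = l + m from by omega,
        Function.iterate_add_apply, hper.1, hle]
    have := βinj i m h1 (by omega) (by omega) (le_refl m) heq
    omega
  -- edge construction
  have edge_cross : ∀ i s, 1 ≤ i → i + 1 ≤ m → 1 ≤ s → s + 1 ≤ m →
      ((σ i ≤ s ∧ s + 1 ≤ σ (i + 1)) ∨ (σ (i + 1) ≤ s ∧ s + 1 ≤ σ i)) →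
      HasEdge f β i s := by
    intro i s hi1 hi2 hs1 hs2 hcr
    unfold HasEdge
    rw [← hσf i hi1 (by omega), ← hσf (i + 1) (by omega) hi2]
    rcases hcr with ⟨ha, hb⟩ | ⟨ha, hb⟩
    · apply Set.Icc_subset_Icc
      · exact le_trans (min_le_left _ _)
          (βle (σ i) s (hσ1 i hi1 (by omega)) ha (by omega))
      · exact le_trans (βle (s + 1) (σ (i + 1)) (by omega) hb (hσ2 (i + 1) (by omega) hi2))
          (le_max_right _ _)
    · apply Set.Icc_subset_Icc
      · exact le_trans (min_le_right _ _)
          (βle (σ (i + 1)) s (hσ1 (i + 1) (by omega) hi2) ha (by omega))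
      · exact le_trans (βle (s + 1) (σ i) (by omega) hb (hσ2 i hi1 (by omega)))
          (le_max_left _ _)
  -- main argument for a fixed r
  intro r hr1 hr2
  have hrm : r + 1 ≤ m := by omega
  -- data about σ r and σ (r+1)
  have hp1 := hσ1 r hr1 (by omega)
  have hp2 := hσ2 r hr1 (by omega)
  have hq1 := hσ1 (r + 1) (by omega) hrm
  have hq2 := hσ2 (r + 1) (by omega) hrm
  have hpq : σ r ≠ σ (r + 1) := by
    intro he
    have := hσinj r (r + 1) hr1 (by omega) (by omega) hrm he
    omega
  -- outgoing edges: any s between the two image indices works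
  obtain ⟨a, b, hab1, hab2⟩ : ∃ a b, ((σ r = a ∧ σ (r + 1) = b) ∨
      (σ r = b ∧ σ (r + 1) = a)) ∧ a < b := by
    rcases lt_or_gt_of_ne hpq with h | h
    · exact ⟨σ r, σ (r + 1), Or.inl ⟨rfl, rfl⟩, h⟩
    · exact ⟨σ (r + 1), σ r, Or.inr ⟨rfl, rfl⟩, h⟩
  have ha1 : 1 ≤ a := by omega
  have hb2 : b ≤ m := by omega
  have hout : ∀ s, a ≤ s → s + 1 ≤ b → HasEdge f β r s := by
    intro s h1 h2
    apply edge_cross r s hr1 hrm (by omega) (by omega)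
    rcases hab1 with ⟨e1, e2⟩ | ⟨e1, e2⟩
    · left; omega
    · right; omega
  -- incoming edges: crossing indices
  have cross_edge : ∀ i, 1 ≤ i → i ≤ m - 1 →
      ((σ i ≤ r ∧ r + 1 ≤ σ (i + 1)) ∨ (σ (i + 1) ≤ r ∧ r + 1 ≤ σ i)) →
      HasEdge f β i r := fun i h1 h2 hc =>
    edge_cross i r h1 (by omega) hr1 hrm hc
  -- weak incoming existence
  have in_weak : ∃ i, 1 ≤ i ∧ i ≤ m - 1 ∧
      ((σ i ≤ r ∧ r + 1 ≤ σ (i + 1)) ∨ (σ (i + 1) ≤ r ∧ r + 1 ≤ σ i)) := by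
    by_contra hcon
    push_neg at hcon
    have hstep : ∀ i, 1 ≤ i → i < m → ((σ i ≤ r) ↔ (σ (i + 1) ≤ r)) := by
      intro i h1 h2
      have := hcon i h1 (by omega)
      omega
    obtain ⟨a, ha1, ha2, hae⟩ := hσsurj 1 (le_refl 1) (by omega)
    obtain ⟨b, hb1, hb2, hbe⟩ := hσsurj m (by omega) (le_refl m)
    have hPa := step_eq (fun i => σ i ≤ r) 1 m hstep a ha1 ha2
    have hPb := step_eq (fun i => σ i ≤ r) 1 m hstep b hb1 hb2
    omega
  -- strong incoming existence when 2r ≠ m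
  have in_strong : 2 * r ≠ m → ∃ i, 1 ≤ i ∧ i ≤ m - 1 ∧ i ≠ r ∧
      ((σ i ≤ r ∧ r + 1 ≤ σ (i + 1)) ∨ (σ (i + 1) ≤ r ∧ r + 1 ≤ σ i)) := by
    intro h2r
    by_contra hcon
    push_neg at hcon
    have hstep : ∀ i, 1 ≤ i → i < m → i ≠ r → ((σ i ≤ r) ↔ (σ (i + 1) ≤ r)) := by
      intro i h1 h2 h3
      have := hcon i h1 (by omega) h3
      omega
    have c1 : ∀ k, 1 ≤ k → k ≤ r → (σ 1 ≤ r ↔ σ k ≤ r) :=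
      step_eq (fun i => σ i ≤ r) 1 r (fun i hi1 hi2 => hstep i hi1 (by omega) (by omega))
    have c2 : ∀ k, r + 1 ≤ k → k ≤ m → (σ (r + 1) ≤ r ↔ σ k ≤ r) :=
      step_eq (fun i => σ i ≤ r) (r + 1) m (fun i hi1 hi2 => hstep i (by omega) hi2 (by omega))
    by_cases hP1 : σ 1 ≤ r
    · exact hnoinv r hr1 (by omega) (fun i h1 h2 => (c1 i h1 h2).mp hP1)
    · have hPr1 : σ (r + 1) ≤ r := by
        by_contra hc
        obtain ⟨a, ha1, ha2, hae⟩ := hσsurj 1 (le_refl 1) (by omega)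
        rcases le_or_gt a r with h' | h'
        · have := c1 a ha1 h'
          omega
        · have := c2 a (by omega) ha2
          omega
      have hmap1 : ∀ i, 1 ≤ i → i ≤ r → r + 1 ≤ σ i := by
        intro i h1 h2
        have := c1 i h1 h2
        omega
      have hmap2 : ∀ i, r + 1 ≤ i → i ≤ m → σ i ≤ r := fun i h1 h2 => (c2 i h1 h2).mp hPr1
      have card1 : m + 1 - (r + 1) ≤ r + 1 - 1 := by
        apply card_le_of_inj σ (r + 1) m 1 r
        · intro i h1 h2
          exact ⟨hσ1 i (by omega) h2, hmap2 i h1 h2⟩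
        · intro i j h1 h2 h3 h4 he
          exact hσinj i j (by omega) h2 (by omega) h4 he
      have card2 : r + 1 - 1 ≤ m + 1 - (r + 1) := by
        apply card_le_of_inj σ 1 r (r + 1) m
        · intro i h1 h2
          exact ⟨hmap1 i h1 h2, hσ2 i h1 (by omega)⟩
        · intro i j h1 h2 h3 h4 he
          exact hσinj i j h1 (by omega) h3 (by omega) he
      omega
  refine ⟨?_, ?_, ?_, ?_⟩
  · obtain ⟨i, h1, h2, hc⟩ := in_weak
    exact ⟨i, h1, h2, cross_edge i h1 h2 hc⟩
  · exact ⟨a, by omega, by omega, hout a (le_refl a) hab2⟩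
  · intro hmain
    have h2r : 2 * r ≠ m := by
      intro he
      exact hmain ⟨⟨r, by omega⟩, he⟩
    obtain ⟨i, h1, h2, h3, hc⟩ := in_strong h2r
    exact ⟨i, h1, h2, h3, cross_edge i h1 h2 hc⟩
  · intro hm2
    by_cases hmin : a = r
    · by_cases hb : b = r + 1
      · exfalso
        rcases hab1 with ⟨e1, e2⟩ | ⟨e1, e2⟩
        · exact hσnofix r hr1 (by omega) (by rw [e1, hmin])
        · exact hσ2fix hm2 r hr1 (by omega) (by rw [e1, hb, e2, hmin])
      · -- b ≥ r + 2 : use s = r + 1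
        have hmax : r + 2 ≤ b := by omega
        exact ⟨r + 1, by omega, by omega, by omega, hout (r + 1) (by omega) (by omega)⟩
    · exact ⟨a, by omega, by omega, hmin, hout a (le_refl a) hab2⟩
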